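/- Let V be a finite-dimensional real inner product space, A : V → V linear with ⟨Av, v⟩ = 0 for all v, H : V → ℝ differentiable, τ > 0, and suppose z⁰, z¹ ∈ V satisfy the Poisson integrator equation (z¹ − z⁰)/τ = A(∫₀¹ ∇H(z⁰ + s(z¹ − z⁰)) ds). Then H(z¹) = H(z⁰). -/

import Mathlib

open scoped RealInnerProductSpace
open MeasureTheory intervalIntegral InnerProductSpace

theorem stmt10 (V : Type*) [NormedAddCommGroup V] [InnerProductSpace ℝ V]
    [FiniteDimensional ℝ V] (A : V →ₗ[ℝ] V) (hA : ∀ v : V, ⟪A v, v⟫ = 0)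
    (H : V → ℝ) (hH : Differentiable ℝ H) (τ : ℝ) (hτ : 0 < τ) (z0 z1 : V)
    (heq : (1 / τ) • (z1 - z0) =
      A (∫ s in (0:ℝ)..1, gradient H (z0 + s • (z1 - z0)))) :
    H z1 = H z0 := by
  set v := z1 - z0 with hv
  set g : ℝ → V := fun s => z0 + s • v with hg
  set w : V := ∫ s in (0:ℝ)..1, gradient H (g s) with hw
  have hvw : v = τ • A w := by
    have := congrArg (fun x => τ • x) heq
    simpa [smul_smul, hτ.ne', mul_one_div, div_self] using this
  have hwv : ⟪v, w⟫ = 0 := by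
    rw [hvw, real_inner_smul_left, hA, mul_zero]
  by_cases hint : IntervalIntegrable (fun s => gradient H (g s)) volume 0 1
  · -- derivative of H ∘ g
    have hgd : ∀ s : ℝ, HasDerivAt g v s := fun s => by
      simpa [hg] using ((hasDerivAt_id s).smul_const v).const_add z0
    have hkey : ∀ s ∈ Set.uIcc (0:ℝ) 1,
        HasDerivAt (fun t => H (g t)) (⟪v, gradient H (g s)⟫) s := by
      intro s _
      have h1 := (hH (g s)).hasGradientAt.hasFDerivAt
      have h2 := h1.comp_hasDerivAt s (hgd s)
      simpa [InnerProductSpace.toDual_apply_apply, real_inner_comm, Function.comp_def] using h2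
    have hfint : IntervalIntegrable (fun s => ⟪v, gradient H (g s)⟫) volume 0 1 := by
      rcases hint with ⟨h1, h2⟩
      exact ⟨(innerSL ℝ v).integrable_comp h1, (innerSL ℝ v).integrable_comp h2⟩
    have hftc := intervalIntegral.integral_eq_sub_of_hasDerivAt hkey hfint
    have hcomm := (innerSL ℝ v).intervalIntegral_comp_comm hint
    simp only [innerSL_apply_apply] at hcomm
    rw [hcomm] at hftc
    have : H (g 1) - H (g 0) = 0 := by rw [← hftc]; exact hwv
    have h0 : g 0 = z0 := by simp [hg]
    have h1 : g 1 = z1 := by simp [hg, hv]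
    rw [h0, h1] at this
    linarith
  · have : w = 0 := intervalIntegral.integral_undef hint
    have hv0 : v = 0 := by rw [hvw, this]; simp
    have : z1 = z0 := by rwa [hv, sub_eq_zero] at hv0
    rw [this]
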